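/- Let V, Ṽ ∈ L(H; H ⊗ H_E) and suppose (X ⊗ 1_E)Ṽ − ṼX = (X ⊗ 1_E)V − VX for all X ∈ L(H). Then there exists a vector |φ⟩ ∈ H_E such that Ṽ = V + 1_H ⊗ |φ⟩ (i.e., Ṽ − V = the map ψ ↦ ψ ⊗ φ). -/

import Mathlib

open Matrix Kronecker

/-- If `(X ⊗ 1_E)Ṽ − ṼX = (X ⊗ 1_E)V − VX` for all `X ∈ L(H)`, then `Ṽ = V + 1_H ⊗ |φ⟩`
for some vector `φ ∈ H_E`. -/
theorem stmt_12 {h e : Type*} [Fintype h] [Fintype e] [DecidableEq h] [DecidableEq e]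
    (V V' : Matrix (h × e) h ℂ)
    (hVV' : ∀ X : Matrix h h ℂ,
      (X ⊗ₖ (1 : Matrix e e ℂ)) * V' - V' * X = (X ⊗ₖ (1 : Matrix e e ℂ)) * V - V * X) :
    ∃ φ : e → ℂ,
      V' = V + Matrix.of (fun p j => if p.1 = j then φ p.2 else 0 : h × e → h → ℂ) := by
  classical
  set D := V' - V with hDdef
  have hD : ∀ X : Matrix h h ℂ, (X ⊗ₖ (1 : Matrix e e ℂ)) * D = D * X := by
    intro X
    have := hVV' X
    rw [hDdef, Matrix.mul_sub, Matrix.sub_mul]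
    rw [sub_eq_sub_iff_sub_eq_sub]
    exact this
  have hent : ∀ (a b i : h) (k : e) (j : h),
      (if a = i then D (b, k) j else 0) = (if b = j then D (i, k) a else 0) := by
    intro a b i k j
    have := congrFun (congrFun (hD (Matrix.single a b 1)) (i, k)) j
    simpa [mul_apply, Fintype.sum_prod_type, Matrix.single, kroneckerMap_apply,
      one_apply, ite_and, Finset.sum_ite_eq, Finset.sum_ite_eq'] using this
  refine ⟨fun k => if hn : Nonempty h then D (hn.some, k) hn.some else 0, ?_⟩
  have : D = Matrix.of (fun p j => if p.1 = j then
      (if hn : Nonempty h then D (hn.some, p.2) hn.some else 0) else 0 : h × e → h → ℂ) := by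
    ext ⟨m, k⟩ j
    have hn : Nonempty h := ⟨m⟩
    simp only [of_apply, dif_pos hn]
    by_cases hmj : m = j
    · subst hmj
      have := hent hn.some m hn.some k m
      simpa using this
    · have := hent m m m k j
      simp [hmj] at this
      simp [hmj, this]
  rw [← this, hDdef]
  abel
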